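/- arXiv:2404.11888 — 3 statements merged into one kernel-verified Lean document; each statement's English description precedes it below -/
import Mathlib

section
/- Let E be a real Hilbert space, let F : E → ℝ be differentiable, L-smooth with L > 0, and μ-strongly convex with μ > 0, and let W_g* ∈ E be a global minimizer of F with F* = F(W_g*). Let (Ω, P) be a probability space, W, W* ∈ E, η ≥ 0, and let g, q : Ω → E be square-integrable random vectors with E[g] = ḡ and E[q] = ∇F(W̄), where W̄ := W − η ḡ. Assume E[‖q − ∇F(W̄)‖²] ≤ σ_g² and E[⟨ḡ − g, ∇F(W̄) − q⟩] = 0. Then for every γ ≥ 0: E[‖W − η g − γ q − W*‖²] ≤ E[‖W − η g − W*‖²] + γ² σ_g² + (2γ² − γ/L)‖∇F(W̄)‖² + (2/μ)(F(W*) − F*) + 2γ(F* − F(W̄)). -/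
open MeasureTheory
open scoped RealInnerProductSpace

section FedEGGAux

variable {E : Type*} [NormedAddCommGroup E] [InnerProductSpace ℝ E] [CompleteSpace E]

lemma fedegg_line_hasDerivAt (F : E → ℝ) (hdiff : Differentiable ℝ F) (x v : E) (t : ℝ) :
    HasDerivAt (fun s : ℝ => F (x + s • v)) ⟪gradient F (x + t • v), v⟫ t := by
  have h2 : HasDerivAt (fun s : ℝ => x + s • v) v t := by
    simpa using ((hasDerivAt_id t).smul_const v).const_add x
  have h3 := ((hdiff (x + t • v)).hasFDerivAt).comp_hasDerivAt t h2
  simp only [gradient, InnerProductSpace.toDual_symm_apply]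
  exact h3

lemma fedegg_descent (F : E → ℝ) (L : ℝ)
    (hdiff : Differentiable ℝ F)
    (hsmooth : ∀ x y : E, ‖gradient F x - gradient F y‖ ≤ L * ‖x - y‖)
    (x y : E) : F y ≤ F x + ⟪gradient F x, y - x⟫ + L / 2 * ‖y - x‖ ^ 2 := by
  set v := y - x with hv
  set ψ : ℝ → ℝ := fun t => F (x + t • v) - t * ⟪gradient F x, v⟫ - L / 2 * t ^ 2 * ‖v‖ ^ 2 with hψ
  have hder : ∀ t : ℝ, HasDerivAt ψ
      (⟪gradient F (x + t • v), v⟫ - ⟪gradient F x, v⟫ - L * t * ‖v‖ ^ 2) t := by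
    intro t
    have h1 := fedegg_line_hasDerivAt F hdiff x v t
    have h2 : HasDerivAt (fun t : ℝ => t * ⟪gradient F x, v⟫) ⟪gradient F x, v⟫ t := by
      simpa using (hasDerivAt_id t).mul_const (⟪gradient F x, v⟫ : ℝ)
    have h3 : HasDerivAt (fun t : ℝ => L / 2 * t ^ 2 * ‖v‖ ^ 2) (L * t * ‖v‖ ^ 2) t := by
      have h4 := (((hasDerivAt_pow 2 t).const_mul (L / 2)).mul_const (‖v‖ ^ 2))
      refine h4.congr_deriv ?_
      rw [show (2:ℕ) - 1 = 1 from rfl]; push_cast; ring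
    exact (h1.sub h2).sub h3
  have hmono : AntitoneOn ψ (Set.Icc (0:ℝ) 1) := by
    apply antitoneOn_of_deriv_nonpos (convex_Icc 0 1)
    · exact fun t _ => ((hder t).continuousAt).continuousWithinAt
    · exact fun t _ => ((hder t).differentiableAt).differentiableWithinAt
    · intro t ht
      rw [interior_Icc] at ht
      rw [(hder t).deriv]
      have hb : ⟪gradient F (x + t • v), v⟫ - ⟪gradient F x, v⟫ ≤ L * t * ‖v‖ ^ 2 := by
        have h5 : ⟪gradient F (x + t • v) - gradient F x, v⟫
            ≤ ‖gradient F (x + t • v) - gradient F x‖ * ‖v‖ := real_inner_le_norm _ _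
        have h6 : ‖gradient F (x + t • v) - gradient F x‖ ≤ L * ‖(x + t • v) - x‖ :=
          hsmooth _ _
        have h7 : ‖(x + t • v) - x‖ = t * ‖v‖ := by
          simp [norm_smul, abs_of_nonneg ht.1.le]
        have h8 : ⟪gradient F (x + t • v) - gradient F x, v⟫
            = ⟪gradient F (x + t • v), v⟫ - ⟪gradient F x, v⟫ := inner_sub_left _ _ _
        have h9 : ‖gradient F (x + t • v) - gradient F x‖ * ‖v‖ ≤ (L * (t * ‖v‖)) * ‖v‖ := by
          apply mul_le_mul_of_nonneg_right _ (norm_nonneg v)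
          rw [← h7]; exact h6
        nlinarith [norm_nonneg v]
      linarith
  have h10 : ψ 1 ≤ ψ 0 :=
    hmono (Set.left_mem_Icc.2 zero_le_one) (Set.right_mem_Icc.2 zero_le_one) zero_le_one
  have h11 : ψ 0 = F x := by simp [hψ]
  have h12 : ψ 1 = F y - ⟪gradient F x, v⟫ - L / 2 * ‖v‖ ^ 2 := by
    simp [hψ, hv]
  rw [h11, h12] at h10
  linarith

lemma fedegg_grad_min (F : E → ℝ) (Wg : E)
    (hWg : ∀ x : E, F Wg ≤ F x) : gradient F Wg = 0 := by
  have h : IsLocalMin F Wg := Filter.Eventually.of_forall fun x => hWg x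
  have h2 := h.fderiv_eq_zero
  simp [gradient, h2]

omit [CompleteSpace E] in
lemma fedegg_integrable_inner {Ω : Type*} [MeasurableSpace Ω] {P : Measure Ω}
    {f h : Ω → E} (hf : MemLp f 2 P) (hh : MemLp h 2 P) :
    Integrable (fun ω => (⟪f ω, h ω⟫ : ℝ)) P := by
  have h1 := L2.integrable_inner (𝕜 := ℝ) (hf.toLp f) (hh.toLp h)
  refine h1.congr ?_
  filter_upwards [hf.coeFn_toLp, hh.coeFn_toLp] with ω h2 h3
  rw [h2, h3]

omit [CompleteSpace E] in
lemma fedegg_integrable_norm_sq {Ω : Type*} [MeasurableSpace Ω] {P : Measure Ω}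
    {f : Ω → E} (hf : MemLp f 2 P) :
    Integrable (fun ω => ‖f ω‖ ^ 2) P := by
  refine (fedegg_integrable_inner hf hf).congr ?_
  filter_upwards with ω
  rw [real_inner_self_eq_norm_sq]

lemma fedegg_integral_inner_const {Ω : Type*} [MeasurableSpace Ω] {P : Measure Ω}
    (c : E) {f : Ω → E} (hf : Integrable f P) :
    ∫ ω, (⟪c, f ω⟫ : ℝ) ∂P = ⟪c, ∫ ω, f ω ∂P⟫ := by
  have := (innerSL ℝ c).integral_comp_comm hf
  simpa using this

end FedEGGAux

/-- Intermediate one-step comparison between the FedEGG update W − ηg − γq and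
the FedAvg update W − ηg, from the proof of Theorem 1, before substituting the
heterogeneity and guiding-strength terms. -/
theorem fedegg_one_step_intermediate_bound
    {E : Type*} [NormedAddCommGroup E] [InnerProductSpace ℝ E] [CompleteSpace E]
    (F : E → ℝ) (L μ : ℝ) (hL : 0 < L) (hμ : 0 < μ)
    (hdiff : Differentiable ℝ F)
    (hsmooth : ∀ x y : E, ‖gradient F x - gradient F y‖ ≤ L * ‖x - y‖)
    (hsc : ∀ x y : E, F y ≥ F x + ⟪gradient F x, y - x⟫ + μ / 2 * ‖y - x‖ ^ 2)
    (Wg : E) (hWg : ∀ x : E, F Wg ≤ F x) (Fstar : ℝ) (hFstar : Fstar = F Wg)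
    {Ω : Type*} [MeasurableSpace Ω] (P : Measure Ω) [IsProbabilityMeasure P]
    (W Wstar : E) (η : ℝ) (hη : 0 ≤ η)
    (g q : Ω → E) (hg : MemLp g 2 P) (hq : MemLp q 2 P)
    (gbar : E) (hgbar : ∫ ω, g ω ∂P = gbar)
    (Wbar : E) (hWbar : Wbar = W - η • gbar)
    (hqbar : ∫ ω, q ω ∂P = gradient F Wbar)
    (σg : ℝ) (hvar : ∫ ω, ‖q ω - gradient F Wbar‖ ^ 2 ∂P ≤ σg ^ 2)
    (hcross : ∫ ω, ⟪gbar - g ω, gradient F Wbar - q ω⟫ ∂P = 0) :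
    ∀ γ : ℝ, 0 ≤ γ →
      ∫ ω, ‖W - η • g ω - γ • q ω - Wstar‖ ^ 2 ∂P ≤
        (∫ ω, ‖W - η • g ω - Wstar‖ ^ 2 ∂P)
          + γ ^ 2 * σg ^ 2
          + (2 * γ ^ 2 - γ / L) * ‖gradient F Wbar‖ ^ 2
          + 2 / μ * (F Wstar - Fstar)
          + 2 * γ * (Fstar - F Wbar) := by
  intro γ hγ
  set G : E := gradient F Wbar with hG
  -- basic integrability
  have hgi : Integrable g P := hg.integrable one_le_two
  have hqi : Integrable q P := hq.integrable one_le_two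
  have hX : MemLp (fun ω => W - η • g ω - Wstar) 2 P :=
    ((memLp_const W).sub (hg.const_smul η)).sub (memLp_const Wstar)
  have hX2 : Integrable (fun ω => ‖W - η • g ω - Wstar‖ ^ 2) P := fedegg_integrable_norm_sq hX
  have hq2 : Integrable (fun ω => ‖q ω‖ ^ 2) P := fedegg_integrable_norm_sq hq
  have hXq : Integrable (fun ω => (⟪W - η • g ω - Wstar, q ω⟫ : ℝ)) P :=
    fedegg_integrable_inner hX hq
  -- value of ∫ ⟪g, q⟫
  have e_cq : ∫ ω, (⟪gbar, q ω⟫ : ℝ) ∂P = ⟪gbar, G⟫ := by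
    rw [fedegg_integral_inner_const gbar hqi, hqbar]
  have e_cg : ∫ ω, (⟪G, g ω⟫ : ℝ) ∂P = ⟪G, gbar⟫ := by
    rw [fedegg_integral_inner_const G hgi, hgbar]
  have hint1 : Integrable (fun ω => (⟪gbar - g ω, G - q ω⟫ : ℝ)) P :=
    fedegg_integrable_inner ((memLp_const gbar).sub hg) ((memLp_const G).sub hq)
  have hint2 : Integrable (fun ω => (⟪gbar, q ω⟫ : ℝ)) P :=
    fedegg_integrable_inner (memLp_const gbar) hq
  have hint3 : Integrable (fun ω => (⟪G, g ω⟫ : ℝ)) P :=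
    fedegg_integrable_inner (memLp_const G) hg
  have e_gq : ∫ ω, (⟪g ω, q ω⟫ : ℝ) ∂P = ⟪gbar, G⟫ := by
    have expand : ∀ ω, (⟪g ω, q ω⟫ : ℝ)
        = ⟪gbar - g ω, G - q ω⟫ - ⟪gbar, G⟫ + ⟪gbar, q ω⟫ + ⟪G, g ω⟫ := by
      intro ω
      have hc : (⟪g ω, G⟫ : ℝ) = ⟪G, g ω⟫ := real_inner_comm _ _
      simp only [inner_sub_left, inner_sub_right]
      linarith
    calc ∫ ω, (⟪g ω, q ω⟫ : ℝ) ∂P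
        = ∫ ω, (⟪gbar - g ω, G - q ω⟫ - ⟪gbar, G⟫ + ⟪gbar, q ω⟫ + ⟪G, g ω⟫ : ℝ) ∂P :=
          integral_congr_ae (Filter.Eventually.of_forall expand)
      _ = (((∫ ω, (⟪gbar - g ω, G - q ω⟫ : ℝ) ∂P) - ∫ _ω, (⟪gbar, G⟫ : ℝ) ∂P)
            + ∫ ω, (⟪gbar, q ω⟫ : ℝ) ∂P) + ∫ ω, (⟪G, g ω⟫ : ℝ) ∂P := by
          have i1 : Integrable (fun ω => (⟪gbar - g ω, G - q ω⟫ - ⟪gbar, G⟫ : ℝ)) P :=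
            hint1.sub (integrable_const _)
          have i2 : Integrable (fun ω => (⟪gbar - g ω, G - q ω⟫ - ⟪gbar, G⟫ + ⟪gbar, q ω⟫ : ℝ)) P :=
            i1.add hint2
          rw [integral_add i2 hint3, integral_add i1 hint2,
            integral_sub hint1 (integrable_const (⟪gbar, G⟫ : ℝ))]
      _ = ⟪gbar, G⟫ := by
          rw [hcross, e_cq, e_cg, integral_const]
          simp [real_inner_comm]
  -- value of ∫ ⟪X, q⟫
  have e_Xq : ∫ ω, (⟪W - η • g ω - Wstar, q ω⟫ : ℝ) ∂P = ⟪G, Wbar - Wstar⟫ := by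
    have expand : ∀ ω, (⟪W - η • g ω - Wstar, q ω⟫ : ℝ)
        = ⟪W - Wstar, q ω⟫ - η * ⟪g ω, q ω⟫ := by
      intro ω
      have h1 : W - η • g ω - Wstar = (W - Wstar) - η • g ω := by abel
      rw [h1, inner_sub_left, real_inner_smul_left]
    have hcq : ∫ ω, (⟪W - Wstar, q ω⟫ : ℝ) ∂P = ⟪W - Wstar, G⟫ := by
      rw [fedegg_integral_inner_const (W - Wstar) hqi, hqbar]
    rw [integral_congr_ae (Filter.Eventually.of_forall expand),
      integral_sub (fedegg_integrable_inner (memLp_const (W - Wstar)) hq)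
        (show Integrable (fun ω => η * ⟪g ω, q ω⟫) P from
          (fedegg_integrable_inner hg hq).const_mul η),
      integral_const_mul, hcq, e_gq, hWbar]
    simp only [inner_sub_left, inner_sub_right, real_inner_smul_left, real_inner_smul_right]
    rw [real_inner_comm W G, real_inner_comm Wstar G, real_inner_comm gbar G]
    ring
  -- bound on ∫ ‖q‖²
  have e_q2 : ∫ ω, ‖q ω‖ ^ 2 ∂P ≤ σg ^ 2 + ‖G‖ ^ 2 := by
    have expand : ∀ ω, ‖q ω‖ ^ 2 = ‖q ω - G‖ ^ 2 + 2 * ⟪G, q ω⟫ - ‖G‖ ^ 2 := by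
      intro ω
      have h1 := norm_sub_sq_real (q ω) G
      have h2 : (⟪q ω, G⟫ : ℝ) = ⟪G, q ω⟫ := real_inner_comm _ _
      linarith
    have hqG2 : Integrable (fun ω => ‖q ω - G‖ ^ 2) P :=
      fedegg_integrable_norm_sq (hq.sub (memLp_const G))
    have hGq : Integrable (fun ω => (⟪G, q ω⟫ : ℝ)) P :=
      fedegg_integrable_inner (memLp_const G) hq
    have e3 : ∫ ω, (⟪G, q ω⟫ : ℝ) ∂P = ‖G‖ ^ 2 := by
      rw [fedegg_integral_inner_const G hqi, hqbar, real_inner_self_eq_norm_sq]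
    have h4 : ∫ ω, ‖q ω‖ ^ 2 ∂P
        = (∫ ω, ‖q ω - G‖ ^ 2 ∂P) + 2 * (∫ ω, (⟪G, q ω⟫ : ℝ) ∂P) - ‖G‖ ^ 2 := by
      rw [integral_congr_ae (Filter.Eventually.of_forall expand),
        integral_sub (show Integrable (fun ω => ‖q ω - G‖ ^ 2 + 2 * ⟪G, q ω⟫) P from
          hqG2.add (hGq.const_mul 2)) (integrable_const (‖G‖ ^ 2 : ℝ)),
        integral_add hqG2 (hGq.const_mul 2), integral_const_mul, integral_const]
      simp
    rw [h4, e3]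
    linarith
  -- expansion of the left-hand side
  have key : ∫ ω, ‖W - η • g ω - γ • q ω - Wstar‖ ^ 2 ∂P
      = (∫ ω, ‖W - η • g ω - Wstar‖ ^ 2 ∂P)
        - 2 * γ * ⟪G, Wbar - Wstar⟫ + γ ^ 2 * ∫ ω, ‖q ω‖ ^ 2 ∂P := by
    have expand : ∀ ω, ‖W - η • g ω - γ • q ω - Wstar‖ ^ 2
        = ‖W - η • g ω - Wstar‖ ^ 2 - 2 * γ * ⟪W - η • g ω - Wstar, q ω⟫
          + γ ^ 2 * ‖q ω‖ ^ 2 := by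
      intro ω
      have h1 : W - η • g ω - γ • q ω - Wstar = (W - η • g ω - Wstar) - γ • q ω := by abel
      rw [h1, norm_sub_sq_real, real_inner_smul_right, norm_smul]
      simp [mul_pow, sq_abs]
      ring
    rw [integral_congr_ae (Filter.Eventually.of_forall expand),
      integral_add (show Integrable
          (fun ω => ‖W - η • g ω - Wstar‖ ^ 2 - 2 * γ * ⟪W - η • g ω - Wstar, q ω⟫) P from
          hX2.sub (hXq.const_mul (2 * γ))) (hq2.const_mul (γ ^ 2)),
      integral_sub hX2 (hXq.const_mul (2 * γ)), integral_const_mul, integral_const_mul, e_Xq]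
  -- deterministic facts
  have Gz : gradient F Wg = 0 := fedegg_grad_min F Wg hWg
  have P1 : μ / 2 * ‖Wstar - Wg‖ ^ 2 ≤ F Wstar - Fstar := by
    have h1 := hsc Wg Wstar
    rw [Gz] at h1
    simp only [inner_zero_left] at h1
    rw [hFstar]
    linarith
  have P1' : ‖Wstar - Wg‖ ^ 2 ≤ 2 / μ * (F Wstar - Fstar) := by
    rw [div_mul_eq_mul_div, le_div_iff₀ hμ]
    nlinarith
  -- strengthened convexity inequality at the minimizer
  have P3 : F Wbar - Fstar + 1 / (2 * L) * ‖G‖ ^ 2 ≤ ⟪G, Wbar - Wg⟫ := by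
    set u : E := Wg + L⁻¹ • G with hu
    have d1 : F u ≤ Fstar + 1 / (2 * L) * ‖G‖ ^ 2 := by
      have h1 := fedegg_descent F L hdiff hsmooth Wg u
      rw [Gz] at h1
      simp only [inner_zero_left] at h1
      have h2 : ‖u - Wg‖ ^ 2 = (L⁻¹) ^ 2 * ‖G‖ ^ 2 := by
        simp [hu, norm_smul, mul_pow, sq_abs]
      rw [h2] at h1
      have h3 : L / 2 * ((L⁻¹) ^ 2 * ‖G‖ ^ 2) = 1 / (2 * L) * ‖G‖ ^ 2 := by
        field_simp
      rw [hFstar]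
      linarith
    have d2 : F Wbar + ⟪G, u - Wbar⟫ ≤ F u := by
      have h1 := hsc Wbar u
      nlinarith [sq_nonneg ‖u - Wbar‖]
    have h5 : (⟪G, u - Wbar⟫ : ℝ) = ⟪G, Wg - Wbar⟫ + L⁻¹ * ‖G‖ ^ 2 := by
      have h6 : u - Wbar = (Wg - Wbar) + L⁻¹ • G := by rw [hu]; abel
      rw [h6, inner_add_right, real_inner_smul_right, real_inner_self_eq_norm_sq]
    have h7 : (⟪G, Wg - Wbar⟫ : ℝ) = -⟪G, Wbar - Wg⟫ := by
      rw [← inner_neg_right]; congr 1; abel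
    have h8 : L⁻¹ = 1 / (2 * L) + 1 / (2 * L) := by
      field_simp
      norm_num
    rw [h5, h7, h8] at d2
    linarith
  have P2 : 2 * γ * ⟪G, Wstar - Wg⟫ ≤ γ ^ 2 * ‖G‖ ^ 2 + ‖Wstar - Wg‖ ^ 2 := by
    have h1 := norm_sub_sq_real (γ • G) (Wstar - Wg)
    have h2 : ‖γ • G‖ ^ 2 = γ ^ 2 * ‖G‖ ^ 2 := by
      simp [norm_smul, mul_pow, sq_abs]
    have h3 : (⟪γ • G, Wstar - Wg⟫ : ℝ) = γ * ⟪G, Wstar - Wg⟫ := real_inner_smul_left _ _ _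
    have h4 : (0:ℝ) ≤ ‖γ • G - (Wstar - Wg)‖ ^ 2 := sq_nonneg _
    rw [h1, h2, h3] at h4
    linarith
  have split : (⟪G, Wbar - Wstar⟫ : ℝ) = ⟪G, Wbar - Wg⟫ - ⟪G, Wstar - Wg⟫ := by
    rw [← inner_sub_right]; congr 1; abel
  -- put everything together
  rw [key]
  have f1 : γ ^ 2 * ∫ ω, ‖q ω‖ ^ 2 ∂P ≤ γ ^ 2 * (σg ^ 2 + ‖G‖ ^ 2) :=
    mul_le_mul_of_nonneg_left e_q2 (sq_nonneg γ)
  have f5 : 2 * γ * (F Wbar - Fstar + 1 / (2 * L) * ‖G‖ ^ 2) ≤ 2 * γ * ⟪G, Wbar - Wg⟫ :=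
    mul_le_mul_of_nonneg_left P3 (by linarith)
  have f3 : 2 * γ * ⟪G, Wstar - Wg⟫ ≤ γ ^ 2 * ‖G‖ ^ 2 + 2 / μ * (F Wstar - Fstar) := by
    linarith
  have f6 : 2 * γ * (1 / (2 * L) * ‖G‖ ^ 2) = γ / L * ‖G‖ ^ 2 := by
    field_simp
  have f1' : γ ^ 2 * ∫ ω, ‖q ω‖ ^ 2 ∂P ≤ γ ^ 2 * σg ^ 2 + γ ^ 2 * ‖G‖ ^ 2 := by
    rw [mul_add] at f1
    exact f1
  have c3 : 2 * γ * (F Wbar - Fstar) + γ / L * ‖G‖ ^ 2 ≤ 2 * γ * ⟪G, Wbar - Wg⟫ := by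
    rw [mul_add, f6] at f5
    linarith
  have c2 : -(2 * γ * ⟪G, Wbar - Wstar⟫)
      = 2 * γ * ⟪G, Wstar - Wg⟫ - 2 * γ * ⟪G, Wbar - Wg⟫ := by
    rw [split]
    ring
  linarith
end

section
/- Let E be a real Hilbert space and let F : E → ℝ be differentiable, L-smooth with L > 0, and μ-strongly convex with μ > 0, with global minimizer W_g* ∈ E and optimal value F* = F(W_g*). Then for all W̄, W* ∈ E and every γ ≥ 0: −2γ⟨W̄ − W*, ∇F(W̄)⟩ ≤ (γ² − γ/L)‖∇F(W̄)‖² + (2/μ)(F(W*) − F*) + 2γ(F* − F(W̄)). -/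
open scoped RealInnerProductSpace

lemma line_hasDerivAt {E : Type*} [NormedAddCommGroup E] [InnerProductSpace ℝ E]
    [CompleteSpace E] (F : E → ℝ) (hdiff : Differentiable ℝ F) (x v : E) (t : ℝ) :
    HasDerivAt (fun s : ℝ => F (x + s • v)) ⟪gradient F (x + t • v), v⟫ t := by
  have h1 : HasFDerivAt F ((InnerProductSpace.toDual ℝ E) (gradient F (x + t • v)))
      (x + t • v) := (hdiff _).hasGradientAt.hasFDerivAt
  have h2 : HasDerivAt (fun s : ℝ => x + s • v) v t := by
    simpa using ((hasDerivAt_id t).smul_const v).const_add x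
  have h3 := h1.comp_hasDerivAt t h2
  rw [InnerProductSpace.toDual_apply_apply] at h3
  exact h3

lemma descent_lemma {E : Type*} [NormedAddCommGroup E] [InnerProductSpace ℝ E]
    [CompleteSpace E] (F : E → ℝ) (L : ℝ) (hL : 0 < L)
    (hdiff : Differentiable ℝ F)
    (hsmooth : ∀ x y : E, ‖gradient F x - gradient F y‖ ≤ L * ‖x - y‖) (x y : E) :
    F y ≤ F x + ⟪gradient F x, y - x⟫ + L / 2 * ‖y - x‖ ^ 2 := by
  set v := y - x with hv
  have hcontg : Continuous (gradient F) := by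
    have : LipschitzWith (Real.toNNReal L) (gradient F) := by
      apply LipschitzWith.of_dist_le_mul
      intro a b
      simpa [dist_eq_norm, Real.coe_toNNReal L hL.le] using hsmooth a b
    exact this.continuous
  have hline : Continuous fun t : ℝ => x + t • v := by continuity
  have hcont : Continuous fun t : ℝ => ⟪gradient F (x + t • v), v⟫ :=
    (hcontg.comp hline).inner continuous_const
  have hxy : x + (1:ℝ) • v = y := by simp [hv]
  have hint : F y - F x = ∫ t in (0:ℝ)..1, ⟪gradient F (x + t • v), v⟫ := by
    have h := intervalIntegral.integral_eq_sub_of_hasDerivAt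
      (f := fun s : ℝ => F (x + s • v))
      (f' := fun t : ℝ => ⟪gradient F (x + t • v), v⟫)
      (fun t _ => line_hasDerivAt F hdiff x v t)
      (hcont.intervalIntegrable 0 1)
    rw [h]
    simp only [one_smul, zero_smul, add_zero]
    congr 2
    rw [hv]; abel
  have hbound : ∀ t ∈ Set.Icc (0:ℝ) 1,
      ⟪gradient F (x + t • v), v⟫ ≤ ⟪gradient F x, v⟫ + L * t * ‖v‖ ^ 2 := by
    intro t ht
    have h1 : ⟪gradient F (x + t • v) - gradient F x, v⟫ ≤
        ‖gradient F (x + t • v) - gradient F x‖ * ‖v‖ := real_inner_le_norm _ _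
    have h2 : ‖gradient F (x + t • v) - gradient F x‖ ≤ L * (t * ‖v‖) := by
      have := hsmooth (x + t • v) x
      simpa [norm_smul, abs_of_nonneg ht.1, mul_assoc] using this
    have h3 : ⟪gradient F (x + t • v) - gradient F x, v⟫ =
        ⟪gradient F (x + t • v), v⟫ - ⟪gradient F x, v⟫ := inner_sub_left _ _ _
    nlinarith [norm_nonneg v, norm_nonneg (gradient F (x + t • v) - gradient F x)]
  have hintg2 : IntervalIntegrable (fun t : ℝ => ⟪gradient F x, v⟫ + L * t * ‖v‖ ^ 2)
      MeasureTheory.volume 0 1 := (Continuous.intervalIntegrable (by continuity)) 0 1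
  have hmono : ∫ t in (0:ℝ)..1, ⟪gradient F (x + t • v), v⟫ ≤
      ∫ t in (0:ℝ)..1, (⟪gradient F x, v⟫ + L * t * ‖v‖ ^ 2) :=
    intervalIntegral.integral_mono_on (by norm_num)
      (hcont.intervalIntegrable 0 1) hintg2 hbound
  have hval : ∫ t in (0:ℝ)..1, (⟪gradient F x, v⟫ + L * t * ‖v‖ ^ 2) =
      ⟪gradient F x, v⟫ + L / 2 * ‖v‖ ^ 2 := by
    have h1 : IntervalIntegrable (fun t : ℝ => L * t * ‖v‖ ^ 2)
        MeasureTheory.volume 0 1 := (Continuous.intervalIntegrable (by continuity)) 0 1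
    rw [intervalIntegral.integral_add (intervalIntegrable_const) h1]
    have h2 : (fun t : ℝ => L * t * ‖v‖ ^ 2) = fun t : ℝ => (L * ‖v‖ ^ 2) * t := by
      ext t; ring
    rw [h2, intervalIntegral.integral_const_mul, integral_id]
    simp
    ring
  linarith [hmono.trans_eq hval, hint]

/-- Bound B1 of the proof of Theorem 1: the cross term between the
aggregated-model displacement W̄ − W* and the guiding-task gradient ∇F(W̄). -/
theorem guiding_cross_term_bound
    {E : Type*} [NormedAddCommGroup E] [InnerProductSpace ℝ E] [CompleteSpace E]
    (F : E → ℝ) (L μ : ℝ) (hL : 0 < L) (hμ : 0 < μ)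
    (hdiff : Differentiable ℝ F)
    (hsmooth : ∀ x y : E, ‖gradient F x - gradient F y‖ ≤ L * ‖x - y‖)
    (hsc : ∀ x y : E, F y ≥ F x + ⟪gradient F x, y - x⟫ + μ / 2 * ‖y - x‖ ^ 2)
    (Wg : E) (hWg : ∀ x : E, F Wg ≤ F x) (Fstar : ℝ) (hFstar : Fstar = F Wg) :
    ∀ (Wbar Wstar : E) (γ : ℝ), 0 ≤ γ →
      -(2 * γ) * ⟪Wbar - Wstar, gradient F Wbar⟫ ≤
        (γ ^ 2 - γ / L) * ‖gradient F Wbar‖ ^ 2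
          + 2 / μ * (F Wstar - Fstar) + 2 * γ * (Fstar - F Wbar) := by
  intro Wbar Wstar γ hγ
  set g := gradient F Wbar with hgdef
  have hg0 : gradient F Wg = 0 := by
    have hmin : IsLocalMin F Wg := Filter.Eventually.of_forall hWg
    rw [gradient, hmin.fderiv_eq_zero, map_zero]
  -- strong convexity at the minimizer
  have hdist : μ / 2 * ‖Wstar - Wg‖ ^ 2 ≤ F Wstar - Fstar := by
    have h := hsc Wg Wstar
    rw [hg0] at h
    simp only [inner_zero_left] at h
    rw [hFstar]; linarith
  -- C1 : F Wbar + ⟪g, Wg - Wbar⟫ + 1/(2L) ‖g‖² ≤ Fstar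
  have hC1 : F Wbar + ⟪g, Wg - Wbar⟫ + 1 / (2 * L) * ‖g‖ ^ 2 ≤ Fstar := by
    set z := Wg + L⁻¹ • g with hz
    have hdes := descent_lemma F L hL hdiff hsmooth Wg z
    have hzWg : z - Wg = L⁻¹ • g := by rw [hz]; abel
    rw [hzWg, hg0] at hdes
    simp only [inner_zero_left] at hdes
    have hnz : ‖L⁻¹ • g‖ ^ 2 = L⁻¹ ^ 2 * ‖g‖ ^ 2 := by
      rw [norm_smul, mul_pow, Real.norm_eq_abs, sq_abs]
    rw [hnz] at hdes
    have hcv := hsc Wbar z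
    have hzWbar : z - Wbar = (Wg - Wbar) + L⁻¹ • g := by rw [hz]; abel
    rw [hzWbar] at hcv
    rw [inner_add_right, real_inner_smul_right, real_inner_self_eq_norm_sq] at hcv
    have hsq : (0:ℝ) ≤ μ / 2 * ‖Wg - Wbar + L⁻¹ • g‖ ^ 2 := by positivity
    have hLne : L ≠ 0 := hL.ne'
    have key : F Wbar + ⟪g, Wg - Wbar⟫ + L⁻¹ * ‖g‖ ^ 2 ≤
        F Wg + L / 2 * (L⁻¹ ^ 2 * ‖g‖ ^ 2) := by
      linarith
    rw [hFstar]
    have hfs : L / 2 * (L⁻¹ ^ 2 * ‖g‖ ^ 2) = 1 / (2 * L) * ‖g‖ ^ 2 := by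
      field_simp
    have hfs2 : L⁻¹ * ‖g‖ ^ 2 - 1 / (2 * L) * ‖g‖ ^ 2 = 1 / (2 * L) * ‖g‖ ^ 2 := by
      field_simp; ring
    linarith [key, hfs ▸ key]
  -- decomposition of the inner product
  have hdecomp : ⟪Wbar - Wstar, g⟫ = ⟪Wbar - Wg, g⟫ - ⟪Wstar - Wg, g⟫ := by
    have h : Wbar - Wstar = (Wbar - Wg) - (Wstar - Wg) := by abel
    rw [h, inner_sub_left]
  have heA : ⟪g, Wg - Wbar⟫ = -⟪Wbar - Wg, g⟫ := by
    rw [real_inner_comm]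
    have h : Wg - Wbar = -(Wbar - Wg) := by abel
    rw [h, inner_neg_left]
  -- Cauchy–Schwarz piece
  have hCS : ⟪Wstar - Wg, g⟫ ≤ ‖Wstar - Wg‖ * ‖g‖ := real_inner_le_norm _ _
  have hB : 2 * γ * ⟪Wstar - Wg, g⟫ ≤ γ ^ 2 * ‖g‖ ^ 2 + ‖Wstar - Wg‖ ^ 2 := by
    nlinarith [sq_nonneg (γ * ‖g‖ - ‖Wstar - Wg‖), mul_nonneg hγ (norm_nonneg g),
      norm_nonneg (Wstar - Wg), mul_le_mul_of_nonneg_left hCS (by linarith : (0:ℝ) ≤ 2 * γ)]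
  have hdist2 : ‖Wstar - Wg‖ ^ 2 ≤ 2 / μ * (F Wstar - Fstar) := by
    have h := hdist
    have hμ' : (0:ℝ) < μ / 2 := by linarith
    rw [div_mul_eq_mul_div, le_div_iff₀ hμ] at *
    nlinarith
  -- A-part: multiply C1 by 2γ
  have hA : -(2 * γ) * ⟪Wbar - Wg, g⟫ ≤ 2 * γ * (Fstar - F Wbar) - γ / L * ‖g‖ ^ 2 := by
    have h : -⟪Wbar - Wg, g⟫ ≤ Fstar - F Wbar - 1 / (2 * L) * ‖g‖ ^ 2 := by
      rw [← heA]; linarith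
    have h2 := mul_le_mul_of_nonneg_left h (by linarith : (0:ℝ) ≤ 2 * γ)
    have h3 : 2 * γ * (1 / (2 * L) * ‖g‖ ^ 2) = γ / L * ‖g‖ ^ 2 := by
      field_simp
    nlinarith
  rw [hdecomp]
  nlinarith [hA, hB, hdist2]
end

section
/- Let E be a real Hilbert space and let F : E → ℝ be differentiable, L-smooth with L > 0, and μ-strongly convex with μ > 0, with global minimizer W_g* ∈ E and optimal value F* = F(W_g*). Then for all W̄, W* ∈ E and every γ ≥ 0: ‖W̄ − γ ∇F(W̄) − W*‖² ≤ ‖W̄ − W*‖² + (2γ² − γ/L)‖∇F(W̄)‖² + (2/μ)(F(W*) − F*) + 2γ(F* − F(W̄)). -/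
open scoped RealInnerProductSpace

theorem my_descent
    {E : Type*} [NormedAddCommGroup E] [InnerProductSpace ℝ E] [CompleteSpace E]
    (F : E → ℝ) (L : ℝ) (hL : 0 < L)
    (hdiff : Differentiable ℝ F)
    (hsmooth : ∀ x y : E, ‖gradient F x - gradient F y‖ ≤ L * ‖x - y‖) :
    ∀ x y : E, F y ≤ F x + ⟪gradient F x, y - x⟫ + L / 2 * ‖y - x‖ ^ 2 := by
  intro x y
  set v := y - x with hv
  have hgradcont : Continuous (gradient F) := by
    have : LipschitzWith (Real.toNNReal L) (gradient F) := by
      apply LipschitzWith.of_dist_le_mul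
      intro a b
      simpa [dist_eq_norm, Real.coe_toNNReal L hL.le] using hsmooth a b
    exact this.continuous
  have hderiv : ∀ t : ℝ, HasDerivAt (fun t : ℝ => F (x + t • v))
      ⟪gradient F (x + t • v), v⟫ t := by
    intro t
    have hc : HasDerivAt (fun t : ℝ => x + t • v) v t := by
      simpa using ((hasDerivAt_id t).smul_const v).const_add x
    have hF : HasFDerivAt F (InnerProductSpace.toDual ℝ E (gradient F (x + t • v)))
        (x + t • v) := (hdiff _).hasGradientAt.hasFDerivAt
    simpa [InnerProductSpace.toDual_apply_apply, Function.comp_def] using hF.comp_hasDerivAt t hc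
  have hcont : Continuous fun t : ℝ => ⟪gradient F (x + t • v), v⟫ := by
    exact (hgradcont.comp (by continuity)).inner continuous_const
  have hFTC : F y - F x = ∫ t in (0:ℝ)..1, ⟪gradient F (x + t • v), v⟫ := by
    have := intervalIntegral.integral_eq_sub_of_hasDerivAt
      (f := fun t : ℝ => F (x + t • v)) (fun t _ => hderiv t)
      (hcont.intervalIntegrable 0 1)
    simpa [hv] using this.symm
  have hbound : (∫ t in (0:ℝ)..1, ⟪gradient F (x + t • v), v⟫) ≤
      ∫ t in (0:ℝ)..1, (⟪gradient F x, v⟫ + L * t * ‖v‖ ^ 2) := by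
    apply intervalIntegral.integral_mono_on (by norm_num)
      (hcont.intervalIntegrable 0 1)
      ((by continuity : Continuous fun t : ℝ =>
        ⟪gradient F x, v⟫ + L * t * ‖v‖ ^ 2).intervalIntegrable 0 1)
    intro t ht
    have h1 : ⟪gradient F (x + t • v) - gradient F x, v⟫ ≤ L * t * ‖v‖ ^ 2 := by
      calc ⟪gradient F (x + t • v) - gradient F x, v⟫
          ≤ ‖gradient F (x + t • v) - gradient F x‖ * ‖v‖ := real_inner_le_norm _ _
        _ ≤ (L * ‖(x + t • v) - x‖) * ‖v‖ := by
            gcongr; exact hsmooth _ _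
        _ = L * t * ‖v‖ ^ 2 := by
            have : ‖(x + t • v) - x‖ = t * ‖v‖ := by
              simp [norm_smul, abs_of_nonneg ht.1]
            rw [this]; ring
    have := add_le_add_left h1 ⟪gradient F x, v⟫
    rw [inner_sub_left] at this; linarith
  have hval : (∫ t in (0:ℝ)..1, (⟪gradient F x, v⟫ + L * t * ‖v‖ ^ 2)) =
      ⟪gradient F x, v⟫ + L / 2 * ‖v‖ ^ 2 := by
    rw [intervalIntegral.integral_add (intervalIntegrable_const)
      ((by continuity : Continuous fun t : ℝ => L * t * ‖v‖ ^ 2).intervalIntegrable 0 1)]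
    have : (∫ t in (0:ℝ)..1, L * t * ‖v‖ ^ 2) = L / 2 * ‖v‖ ^ 2 := by
      have : (fun t : ℝ => L * t * ‖v‖ ^ 2) = fun t : ℝ => (L * ‖v‖ ^ 2) * t := by
        funext t; ring
      rw [this, intervalIntegral.integral_const_mul, integral_id]
      ring
    rw [this]
    simp
  linarith [hFTC, hbound, hval]

/-- Deterministic one-step guiding-task descent bound underlying Theorem 1:
one exact gradient step of the guiding task F from the aggregated model W̄
changes the squared distance to the FL optimum W* by at most the stated amount. -/
theorem guiding_one_step_descent_bound
    {E : Type*} [NormedAddCommGroup E] [InnerProductSpace ℝ E] [CompleteSpace E]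
    (F : E → ℝ) (L μ : ℝ) (hL : 0 < L) (hμ : 0 < μ)
    (hdiff : Differentiable ℝ F)
    (hsmooth : ∀ x y : E, ‖gradient F x - gradient F y‖ ≤ L * ‖x - y‖)
    (hsc : ∀ x y : E, F y ≥ F x + ⟪gradient F x, y - x⟫ + μ / 2 * ‖y - x‖ ^ 2)
    (Wg : E) (hWg : ∀ x : E, F Wg ≤ F x) (Fstar : ℝ) (hFstar : Fstar = F Wg) :
    ∀ (Wbar Wstar : E) (γ : ℝ), 0 ≤ γ →
      ‖Wbar - γ • gradient F Wbar - Wstar‖ ^ 2 ≤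
        ‖Wbar - Wstar‖ ^ 2 + (2 * γ ^ 2 - γ / L) * ‖gradient F Wbar‖ ^ 2
          + 2 / μ * (F Wstar - Fstar) + 2 * γ * (Fstar - F Wbar) := by
  have hdesc := my_descent F L hL hdiff hsmooth
  -- gradient vanishes at the global minimizer
  have hgrad0 : gradient F Wg = 0 := by
    set u := gradient F Wg with hu
    have h1 := hdesc Wg (Wg - (1/L) • u)
    have h2 := hWg (Wg - (1/L) • u)
    have e1 : ⟪u, (Wg - (1/L) • u) - Wg⟫ = -(1/L) * ‖u‖ ^ 2 := by
      simp [inner_smul_right, real_inner_self_eq_norm_sq]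
    have e2 : ‖(Wg - (1/L) • u) - Wg‖ ^ 2 = (1/L) ^ 2 * ‖u‖ ^ 2 := by
      have : (Wg - (1/L) • u) - Wg = -((1/L) • u) := by abel
      rw [this, norm_neg, norm_smul, mul_pow, Real.norm_eq_abs, abs_of_pos (by positivity : (0:ℝ) < 1/L)]
    rw [e1, e2] at h1
    have hLne : L ≠ 0 := ne_of_gt hL
    have : ‖u‖ ^ 2 ≤ 0 := by
      have h3 : F Wg ≤ F Wg + (-(1/L) * ‖u‖^2) + L/2 * ((1/L)^2 * ‖u‖^2) :=
        le_trans h2 h1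
      have : -(1/L) * ‖u‖^2 + L/2 * ((1/L)^2 * ‖u‖^2) = -(1/(2*L)) * ‖u‖^2 := by
        field_simp; ring
      nlinarith [sq_nonneg ‖u‖, h3, this, (by positivity : (0:ℝ) < 1/(2*L))]
    have : ‖u‖ = 0 := by nlinarith [norm_nonneg u]
    exact norm_eq_zero.mp this
  intro Wbar Wstar γ hγ
  set g := gradient F Wbar with hg
  set G := ‖g‖ ^ 2 with hG
  -- key interpolation: ⟪g, Wbar - Wg⟫ ≥ (F Wbar - Fstar) + G/(2L)
  have hkey : F Wbar - Fstar + 1/(2*L) * G ≤ ⟪g, Wbar - Wg⟫ := by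
    set z := Wg + (1/L) • g with hz
    have h1 := hdesc Wg z
    have e1 : ⟪gradient F Wg, z - Wg⟫ = 0 := by rw [hgrad0]; simp
    have e2 : ‖z - Wg‖ ^ 2 = (1/L)^2 * G := by
      have : z - Wg = (1/L) • g := by rw [hz]; abel
      rw [this, norm_smul, mul_pow, Real.norm_eq_abs, abs_of_pos (by positivity : (0:ℝ) < 1/L), hG]
    rw [e1, e2] at h1
    have h2 := hsc Wbar z
    have e3 : ⟪g, z - Wbar⟫ = ⟪g, Wg - Wbar⟫ + (1/L) * G := by
      have : z - Wbar = (Wg - Wbar) + (1/L) • g := by rw [hz]; abel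
      rw [this, inner_add_right, inner_smul_right, real_inner_self_eq_norm_sq]
    rw [e3] at h2
    have e4 : ⟪g, Wg - Wbar⟫ = -⟪g, Wbar - Wg⟫ := by
      rw [← inner_neg_right]; congr 1; abel
    rw [e4] at h2
    have hμterm : 0 ≤ μ / 2 * ‖z - Wbar‖ ^ 2 := by positivity
    have hLL : L/2 * ((1/L)^2 * G) = 1/(2*L) * G := by field_simp
    rw [hLL] at h1
    have hLG : 1/L * G = 1/(2*L) * G + 1/(2*L) * G := by ring
    linarith [h1, h2, hμterm, hLG, hFstar.le, hFstar.ge]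
  -- distance bound at minimizer
  have hdist : ‖Wg - Wstar‖ ^ 2 ≤ 2/μ * (F Wstar - Fstar) := by
    have h := hsc Wg Wstar
    rw [hgrad0] at h
    simp only [inner_zero_left] at h
    have : ‖Wstar - Wg‖ = ‖Wg - Wstar‖ := norm_sub_rev _ _
    rw [this] at h
    rw [hFstar]
    have := mul_le_mul_of_nonneg_left (by linarith : μ/2 * ‖Wg - Wstar‖^2 ≤ F Wstar - F Wg)
      (by positivity : (0:ℝ) ≤ 2/μ)
    calc ‖Wg - Wstar‖^2 = 2/μ * (μ/2 * ‖Wg - Wstar‖^2) := by field_simp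
      _ ≤ 2/μ * (F Wstar - F Wg) := this
  -- expand the squared norm
  have hexp : ‖Wbar - γ • g - Wstar‖ ^ 2 =
      ‖Wbar - Wstar‖ ^ 2 - 2 * γ * ⟪g, Wbar - Wstar⟫ + γ^2 * G := by
    have : Wbar - γ • g - Wstar = (Wbar - Wstar) - γ • g := by abel
    rw [this, norm_sub_sq_real, real_inner_smul_right, norm_smul,
      real_inner_comm, mul_pow, Real.norm_eq_abs, sq_abs, hG]
    ring
  have hsplit : ⟪g, Wbar - Wstar⟫ = ⟪g, Wbar - Wg⟫ + ⟪g, Wg - Wstar⟫ := by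
    rw [← inner_add_right]; congr 1; abel
  have hyoung : -(2 * γ * ⟪g, Wg - Wstar⟫) ≤ γ^2 * G + ‖Wg - Wstar‖^2 := by
    have h1 : |⟪g, Wg - Wstar⟫| ≤ ‖g‖ * ‖Wg - Wstar‖ := abs_real_inner_le_norm _ _
    have h2 : -(2 * γ * ⟪g, Wg - Wstar⟫) ≤ 2 * γ * (‖g‖ * ‖Wg - Wstar‖) := by
      have := neg_abs_le ⟪g, Wg - Wstar⟫
      nlinarith
    nlinarith [sq_nonneg (γ * ‖g‖ - ‖Wg - Wstar‖)]
  rw [hexp, hsplit]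
  have hGnn : 0 ≤ G := by positivity
  have hL2 : 1/(2*L) * G ≥ 0 := by positivity
  have hq : γ * (1/(2*L) * G) * 2 = γ/L * G := by ring
  linarith [mul_le_mul_of_nonneg_left hkey hγ, hyoung, hdist, hq]
end
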